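/- Let p be a prime, n ≥ 0, and d ∈ {0, 1, …, p−1}. Define F_p(n) as the number of m with 0 ≤ m ≤ n such that p does not divide C(n,m). Then F_p(p·n + d) = (d + 1)·F_p(n). -/

import Mathlib

theorem fine_recurrence (p : ℕ) (hp : p.Prime) (n d : ℕ) (hd : d < p) :
    ((Finset.range (p * n + d + 1)).filter fun m => ¬ p ∣ (p * n + d).choose m).card =
      (d + 1) * ((Finset.range (n + 1)).filter fun m => ¬ p ∣ n.choose m).card := by
  haveI : Fact p.Prime := ⟨hp⟩
  have hp0 : 0 < p := hp.pos
  have hmod : (p * n + d) % p = d := by rw [Nat.mul_add_mod, Nat.mod_eq_of_lt hd]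
  have hdiv : (p * n + d) / p = n := by
    rw [Nat.mul_add_div hp0, Nat.div_eq_of_lt hd, add_zero]
  -- p ∤ C(d, r) iff r ≤ d, for r < p
  have hkey : ∀ r < p, (¬ p ∣ d.choose r ↔ r ≤ d) := by
    intro r hr
    constructor
    · intro h
      by_contra hrd
      exact h (Nat.choose_eq_zero_of_lt (lt_of_not_ge hrd) ▸ dvd_zero p)
    · intro hrd hdvd
      have h1 : d.choose r ∣ Nat.factorial d := by
        have := Nat.choose_mul_factorial_mul_factorial hrd
        exact ⟨Nat.factorial r * Nat.factorial (d - r), by rw [← this, mul_assoc]⟩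
      have : p ∣ Nat.factorial d := hdvd.trans h1
      exact absurd (hp.dvd_factorial.mp this) (not_le.mpr hd)
  have key : ∀ m, (¬ p ∣ (p * n + d).choose m) ↔ (m % p ≤ d ∧ ¬ p ∣ n.choose (m / p)) := by
    intro m
    have lucas := Choose.choose_modEq_choose_mod_mul_choose_div_nat (p := p)
      (n := p * n + d) (k := m)
    rw [hmod, hdiv] at lucas
    have hdvd : p ∣ (p * n + d).choose m ↔ p ∣ d.choose (m % p) * n.choose (m / p) := by
      rw [Nat.dvd_iff_mod_eq_zero, Nat.dvd_iff_mod_eq_zero, lucas]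
    rw [hdvd, hp.dvd_mul, not_or, hkey (m % p) (Nat.mod_lt _ hp0)]
  have hcard : (Finset.range (d + 1) ×ˢ
      ((Finset.range (n + 1)).filter fun m => ¬ p ∣ n.choose m)).card =
      (d + 1) * ((Finset.range (n + 1)).filter fun m => ¬ p ∣ n.choose m).card := by
    rw [Finset.card_product, Finset.card_range]
  rw [← hcard]
  apply Finset.card_nbij' (i := fun m => ((m % p, m / p) : ℕ × ℕ))
    (j := fun x => p * x.2 + x.1)
  · intro m hm
    simp only [Finset.mem_coe, Finset.mem_filter, Finset.mem_range] at hm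
    obtain ⟨hm1, hm2⟩ := hm
    rw [key] at hm2
    simp only [Finset.mem_coe, Finset.mem_product, Finset.mem_range, Finset.mem_filter]
    have hlt : m < (n + 1) * p := by
      have h : (n + 1) * p = p * n + p := by ring
      omega
    exact ⟨Nat.lt_succ_of_le hm2.1, (Nat.div_lt_iff_lt_mul hp0).mpr hlt, hm2.2⟩
  · intro x hx
    simp only [Finset.mem_coe, Finset.mem_product, Finset.mem_range, Finset.mem_filter] at hx
    obtain ⟨hx1, hx2, hx3⟩ := hx
    simp only [Finset.mem_coe, Finset.mem_filter, Finset.mem_range]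
    have hx1' : x.1 < p := lt_of_lt_of_le hx1 hd
    have hmod2 : (p * x.2 + x.1) % p = x.1 := by rw [Nat.mul_add_mod, Nat.mod_eq_of_lt hx1']
    have hdiv2 : (p * x.2 + x.1) / p = x.2 := by
      rw [Nat.mul_add_div hp0, Nat.div_eq_of_lt hx1', add_zero]
    refine ⟨?_, ?_⟩
    · have : x.2 ≤ n := by omega
      have : p * x.2 ≤ p * n := Nat.mul_le_mul_left p this
      omega
    · rw [key, hmod2, hdiv2]
      exact ⟨by omega, hx3⟩
  · intro m _
    simp only
    exact Nat.div_add_mod m p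
  · intro x hx
    simp only [Finset.mem_coe, Finset.mem_product, Finset.mem_range] at hx
    have hx1' : x.1 < p := lt_of_lt_of_le hx.1 hd
    have hmod2 : (p * x.2 + x.1) % p = x.1 := by rw [Nat.mul_add_mod, Nat.mod_eq_of_lt hx1']
    have hdiv2 : (p * x.2 + x.1) / p = x.2 := by
      rw [Nat.mul_add_div hp0, Nat.div_eq_of_lt hx1', add_zero]
    simp [hmod2, hdiv2]
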